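/- Let a,b ∈ ℂ∖{0} with |a| ≠ |b|, |a||b| ≠ 1, and a·conj(b) ∉ ℝ (so a, b and 0 are not collinear). Then: (1) LIS[a,b,−1/conj(a),−1/conj(b)] = (b(1+|a|²) − a(1+|b|²))/(|a|² − |b|²); (2) LIS[a,b,1/conj(a),1/conj(b)] = (a(1−|b|²) − b(1−|a|²))/(|a|² − |b|²); (3) LIS[a,1/conj(b),b,1/conj(a)] = (a(1−|b|²) + b(1−|a|²))/(1 − |a|²|b|²); (4) LIS[a,−1/conj(b),b,−1/conj(a)] = (a(1+|b|²) + b(1+|a|²))/(1 − |a|²|b|²). In each case the denominator (conj of first pair difference)·(second pair difference) − … in the defining expression of LIS is nonzero. -/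

import Mathlib

open ComplexConjugate

/-- The intersection point of the Euclidean lines through `a, b` and through `c, d`. -/
noncomputable def LIS (a b c d : ℂ) : ℂ :=
  ((conj a * b - a * conj b) * (c - d) - (conj c * d - c * conj d) * (a - b)) /
    ((conj a - conj b) * (c - d) - (conj c - conj d) * (a - b))

/-- The denominator in the defining expression of `LIS`. -/
noncomputable def LISden (a b c d : ℂ) : ℂ :=
  (conj a - conj b) * (c - d) - (conj c - conj d) * (a - b)

set_option maxHeartbeats 1000000 in
theorem lisdef (a b c d : ℂ) :
    LIS a b c d = ((conj a * b - a * conj b) * (c - d) - (conj c * d - c * conj d) * (a - b)) /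
      LISden a b c d := rfl

set_option maxHeartbeats 1000000 in
theorem stmt0 (a b : ℂ) (ha : a ≠ 0) (hb : b ≠ 0)
    (hab : ‖a‖ ≠ ‖b‖)
    (hab1 : ‖a‖ * ‖b‖ ≠ 1)
    (hnc : a * conj b ∉ Set.range (Complex.ofReal)) :
    (LISden a b (-1 / conj a) (-1 / conj b) ≠ 0 ∧
      LIS a b (-1 / conj a) (-1 / conj b) =
        (b * (1 + (‖a‖ : ℂ) ^ 2) - a * (1 + (‖b‖ : ℂ) ^ 2)) /
          ((‖a‖ : ℂ) ^ 2 - (‖b‖ : ℂ) ^ 2)) ∧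
    (LISden a b (1 / conj a) (1 / conj b) ≠ 0 ∧
      LIS a b (1 / conj a) (1 / conj b) =
        (a * (1 - (‖b‖ : ℂ) ^ 2) - b * (1 - (‖a‖ : ℂ) ^ 2)) /
          ((‖a‖ : ℂ) ^ 2 - (‖b‖ : ℂ) ^ 2)) ∧
    (LISden a (1 / conj b) b (1 / conj a) ≠ 0 ∧
      LIS a (1 / conj b) b (1 / conj a) =
        (a * (1 - (‖b‖ : ℂ) ^ 2) + b * (1 - (‖a‖ : ℂ) ^ 2)) /
          (1 - (‖a‖ : ℂ) ^ 2 * (‖b‖ : ℂ) ^ 2)) ∧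
    (LISden a (-1 / conj b) b (-1 / conj a) ≠ 0 ∧
      LIS a (-1 / conj b) b (-1 / conj a) =
        (a * (1 + (‖b‖ : ℂ) ^ 2) + b * (1 + (‖a‖ : ℂ) ^ 2)) /
          (1 - (‖a‖ : ℂ) ^ 2 * (‖b‖ : ℂ) ^ 2)) := by
  
  have hA : conj a ≠ 0 := by simpa using ha
  have hB : conj b ≠ 0 := by simpa using hb
  have habsa : ((‖a‖ : ℂ)) ^ 2 = a * conj a := by
    rw [Complex.mul_conj]; norm_cast; exact Complex.sq_norm a
  have habsb : ((‖b‖ : ℂ)) ^ 2 = b * conj b := by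
    rw [Complex.mul_conj]; norm_cast; exact Complex.sq_norm b
  have hP : b * conj a - a * conj b ≠ 0 := by
    intro h
    apply hnc
    have h2 : conj (a * conj b) = a * conj b := by
      simp only [map_mul, Complex.conj_conj]
      rw [mul_comm]
      exact sub_eq_zero.mp h
    exact ⟨(a * conj b).re, Complex.conj_eq_iff_re.mp h2⟩
  have hQr : ‖a‖ ^ 2 ≠ ‖b‖ ^ 2 := by
    intro h; exact hab (by nlinarith [norm_nonneg a, norm_nonneg b])
  have hQ : a * conj a - b * conj b ≠ 0 := by
    rw [← habsa, ← habsb]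
    intro h
    exact hQr (by exact_mod_cast sub_eq_zero.mp h)
  have hRr : ‖a‖ ^ 2 * ‖b‖ ^ 2 ≠ 1 := by
    intro h
    apply hab1
    have hx0 : 0 ≤ ‖a‖ * ‖b‖ :=
      mul_nonneg (norm_nonneg a) (norm_nonneg b)
    have h1 : (‖a‖ * ‖b‖ - 1) * (‖a‖ * ‖b‖ + 1) = 0 := by
      linear_combination h
    rcases mul_eq_zero.mp h1 with h2 | h2
    · linarith
    · linarith
  have hR : 1 - (a * conj a) * (b * conj b) ≠ 0 := by
    rw [← habsa, ← habsb]
    intro h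
    apply hRr
    have : ((‖a‖ ^ 2 * ‖b‖ ^ 2 : ℝ) : ℂ) = 1 := by
      push_cast; linear_combination -h
    exact_mod_cast this
  have hQ2 : ((‖a‖ : ℂ)) ^ 2 - ((‖b‖ : ℂ)) ^ 2 ≠ 0 := by
    rw [habsa, habsb]; exact hQ
  have hR2 : 1 - ((‖a‖ : ℂ)) ^ 2 * ((‖b‖ : ℂ)) ^ 2 ≠ 0 := by
    rw [habsa, habsb]; exact hR
  -- case 1
  have key1 : LISden a b (-1 / conj a) (-1 / conj b) * (a * b * conj a * conj b) =
      (b * conj a - a * conj b) * (a * conj a - b * conj b) := by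
    rw [LISden]
    simp only [map_div₀, map_neg, map_one, Complex.conj_conj]
    field_simp
    ring
  have hden1 : LISden a b (-1 / conj a) (-1 / conj b) ≠ 0 := by
    intro h
    rw [h, zero_mul] at key1
    exact mul_ne_zero hP hQ key1.symm
  have heq1 : LIS a b (-1 / conj a) (-1 / conj b) =
      (b * (1 + (‖a‖ : ℂ) ^ 2) - a * (1 + (‖b‖ : ℂ) ^ 2)) /
        ((‖a‖ : ℂ) ^ 2 - (‖b‖ : ℂ) ^ 2) := by
    rw [lisdef, div_eq_div_iff hden1 hQ2, habsa, habsb, LISden]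
    simp only [map_div₀, map_neg, map_one, Complex.conj_conj]
    field_simp
    ring
  have hR' : (a * conj a) * (b * conj b) - 1 ≠ 0 := fun h => hR (by linear_combination -h)
  -- case 2
  have key2 : LISden a b (1 / conj a) (1 / conj b) * (a * b * conj a * conj b) =
      -((b * conj a - a * conj b) * (a * conj a - b * conj b)) := by
    rw [LISden]
    simp only [map_div₀, map_one, Complex.conj_conj]
    field_simp
    ring
  have hden2 : LISden a b (1 / conj a) (1 / conj b) ≠ 0 := by
    intro h
    rw [h, zero_mul] at key2
    exact mul_ne_zero hP hQ (by linear_combination key2)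
  have heq2 : LIS a b (1 / conj a) (1 / conj b) =
      (a * (1 - (‖b‖ : ℂ) ^ 2) - b * (1 - (‖a‖ : ℂ) ^ 2)) /
        ((‖a‖ : ℂ) ^ 2 - (‖b‖ : ℂ) ^ 2) := by
    rw [lisdef, div_eq_div_iff hden2 hQ2, habsa, habsb, LISden]
    simp only [map_div₀, map_one, Complex.conj_conj]
    field_simp
    ring
  -- case 3
  have key3 : LISden a (1 / conj b) b (1 / conj a) * (a * b * conj a * conj b) =
      (b * conj a - a * conj b) * ((a * conj a) * (b * conj b) - 1) := by
    rw [LISden]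
    simp only [map_div₀, map_one, Complex.conj_conj]
    field_simp
    ring
  have hden3 : LISden a (1 / conj b) b (1 / conj a) ≠ 0 := by
    intro h
    rw [h, zero_mul] at key3
    exact mul_ne_zero hP hR' key3.symm
  have heq3 : LIS a (1 / conj b) b (1 / conj a) =
      (a * (1 - (‖b‖ : ℂ) ^ 2) + b * (1 - (‖a‖ : ℂ) ^ 2)) /
        (1 - (‖a‖ : ℂ) ^ 2 * (‖b‖ : ℂ) ^ 2) := by
    rw [lisdef, div_eq_div_iff hden3 hR2, habsa, habsb, LISden]
    simp only [map_div₀, map_one, Complex.conj_conj]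
    field_simp
    ring
  -- case 4
  have key4 : LISden a (-1 / conj b) b (-1 / conj a) * (a * b * conj a * conj b) =
      (b * conj a - a * conj b) * ((a * conj a) * (b * conj b) - 1) := by
    rw [LISden]
    simp only [map_div₀, map_neg, map_one, Complex.conj_conj]
    field_simp
    ring
  have hden4 : LISden a (-1 / conj b) b (-1 / conj a) ≠ 0 := by
    intro h
    rw [h, zero_mul] at key4
    exact mul_ne_zero hP hR' key4.symm
  have heq4 : LIS a (-1 / conj b) b (-1 / conj a) =
      (a * (1 + (‖b‖ : ℂ) ^ 2) + b * (1 + (‖a‖ : ℂ) ^ 2)) /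
        (1 - (‖a‖ : ℂ) ^ 2 * (‖b‖ : ℂ) ^ 2) := by
    rw [lisdef, div_eq_div_iff hden4 hR2, habsa, habsb, LISden]
    simp only [map_div₀, map_neg, map_one, Complex.conj_conj]
    field_simp
    ring
  exact ⟨⟨hden1, heq1⟩, ⟨hden2, heq2⟩, ⟨hden3, heq3⟩, ⟨hden4, heq4⟩⟩
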